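/- (Identity Principle) Let Ω ⊆ ℍ be a slice domain and f, g : Ω → ℍ slice regular functions. If f and g coincide on a subset C of Ω ∩ L_I for some I ∈ S, and C has an accumulation point in Ω ∩ L_I, then f ≡ g on all of Ω. -/

import Mathlib

noncomputable section

abbrev H := Quaternion ℝ

/-- The sphere of quaternion imaginary units. -/
def Sph : Set H := {q : H | q ^ 2 = -1}

/-- The complex line (Slice) through 1 and `I`. -/
def Slice (I : H) : Set H := {q : H | ∃ x y : ℝ, q = (x : H) + y • I}

/-- The 2-sphere `x + y𝕊`. -/
def sphSet (x y : ℝ) : Set H := {q : H | ∃ I ∈ Sph, q = (x : H) + y • I}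

/-- The real axis inside the quaternions. -/
def realAxis : Set H := {q : H | ∃ r : ℝ, q = (r : H)}

/-- `f` is holomorphic on the `I`-Slice of `Ω`: at every point of `Ω ∩ L_I` the
map `(x,y) ↦ f(x+yI)` is (real) differentiable and satisfies the
Cauchy–Riemann equation `∂f/∂x + I ∂f/∂y = 0`. -/
def HoloSlice (Ω : Set H) (f : H → H) (I : H) : Prop :=
  ∀ x y : ℝ, (x : H) + y • I ∈ Ω →
    DifferentiableAt ℝ (fun p : ℝ × ℝ => f ((p.1 : H) + p.2 • I)) (x, y) ∧
    fderiv ℝ (fun p : ℝ × ℝ => f ((p.1 : H) + p.2 • I)) (x, y) (1, 0)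
      + I * fderiv ℝ (fun p : ℝ × ℝ => f ((p.1 : H) + p.2 • I)) (x, y) (0, 1) = 0

/-- Slice regular functions: every Slice restriction is holomorphic. -/
def SliceRegular (Ω : Set H) (f : H → H) : Prop :=
  ∀ I ∈ Sph, HoloSlice Ω f I

/-- A Slice domain: a domain intersecting the real axis whose slices are domains. -/
def IsSliceDomain (Ω : Set H) : Prop :=
  IsOpen Ω ∧ IsConnected Ω ∧ (Ω ∩ realAxis).Nonempty ∧
  ∀ I ∈ Sph, IsConnected (Ω ∩ Slice I)

/-- Axially symmetric set. -/
def AxSymm (C : Set H) : Prop :=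
  ∀ (x y : ℝ), ∀ I ∈ Sph, (x : H) + y • I ∈ C → ∀ J ∈ Sph, (x : H) + y • J ∈ C

/-- Symmetric Slice domain. -/
def IsSymmSliceDomain (Ω : Set H) : Prop := IsSliceDomain Ω ∧ AxSymm Ω

/-- Orthogonality of quaternions w.r.t. the Euclidean inner product `re (p * star q)`. -/
def Orth (I J : H) : Prop := (I * star J).re = 0

/-- `F, G` give a splitting `f = F + G J` of `f` on the Slice `Ω ∩ L_I`,
with `F, G` holomorphic and `L_I`-valued. -/
structure IsSplitting (Ω : Set H) (f : H → H) (I J : H) (F G : H → H) : Prop where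
  mapsF : ∀ q ∈ Ω ∩ Slice I, F q ∈ Slice I
  mapsG : ∀ q ∈ Ω ∩ Slice I, G q ∈ Slice I
  holoF : HoloSlice Ω F I
  holoG : HoloSlice Ω G I
  eq : ∀ q ∈ Ω ∩ Slice I, f q = F q + G q * J

/-- `h` is the regular product `f * g`: it is Slice regular and restricts on some
Slice `L_I` (with `I ⊥ J`, splittings `f = F + GJ`, `g = F' + G'J`) to the
product formula.  (Note `star` is quaternionic conjugation, which restricts to
complex conjugation on each Slice.) -/
def IsRegularProduct (Ω : Set H) (f g h : H → H) : Prop :=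
  SliceRegular Ω h ∧
  ∃ I ∈ Sph, ∃ J ∈ Sph, Orth I J ∧
    ∃ F G F' G' : H → H, IsSplitting Ω f I J F G ∧ IsSplitting Ω g I J F' G' ∧
      ∀ q ∈ Ω ∩ Slice I,
        h q = (F q * F' q - G q * star (G' (star q)))
            + (F q * G' q + G q * star (F' (star q))) * J

/-- `fc` is the regular conjugate of `f`. -/
def IsRegularConj (Ω : Set H) (f fc : H → H) : Prop :=
  SliceRegular Ω fc ∧
  ∃ I ∈ Sph, ∃ J ∈ Sph, Orth I J ∧
    ∃ F G : H → H, IsSplitting Ω f I J F G ∧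
      ∀ q ∈ Ω ∩ Slice I, fc q = star (F (star q)) - G q * J

/-- `fs` is the symmetrization `f^s = f * f^c` of `f`. -/
def IsSymmetrization (Ω : Set H) (f fs : H → H) : Prop :=
  ∃ fc : H → H, IsRegularConj Ω f fc ∧ IsRegularProduct Ω f fc fs

/-- The degenerate set of `f`: union of the spheres `x + y𝕊` (`y ≠ 0`)
contained in `Ω` on which `f` is constant. -/
def DegSet (Ω : Set H) (f : H → H) : Set H :=
  {q : H | ∃ x y : ℝ, y ≠ 0 ∧ q ∈ sphSet x y ∧ sphSet x y ⊆ Ω ∧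
    ∀ p ∈ sphSet x y, ∀ p' ∈ sphSet x y, f p = f p'}


open Filter in

-- ===== auxiliary lemmas =====

lemma sph_re (I : H) (hI : I ∈ Sph) : I.re = 0 := by
  have h : I * I = -1 := by rw [← sq]; exact hI
  have h1 := congrArg QuaternionAlgebra.re h
  have h2 := congrArg QuaternionAlgebra.imI h
  have h3 := congrArg QuaternionAlgebra.imJ h
  have h4 := congrArg QuaternionAlgebra.imK h
  simp [Quaternion.re_mul, Quaternion.imI_mul, Quaternion.imJ_mul, Quaternion.imK_mul,
    Quaternion.re_one, Quaternion.imI_one, Quaternion.imJ_one, Quaternion.imK_one]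
    at h1 h2 h3 h4
  nlinarith [sq_nonneg I.re, sq_nonneg I.imI, sq_nonneg I.imJ, sq_nonneg I.imK,
    sq_nonneg (I.re * I.imI), sq_nonneg (I.re * I.imJ), sq_nonneg (I.re * I.imK)]

lemma sph_normSq (I : H) (hI : I ∈ Sph) : Quaternion.normSq I = 1 := by
  have h : I * I = -1 := by rw [← sq]; exact hI
  have h1 := congrArg QuaternionAlgebra.re h
  have hre := sph_re I hI
  simp [Quaternion.re_mul, hre, Quaternion.re_one] at h1
  simp [Quaternion.normSq_def', hre]
  nlinarith

lemma sph_mul_self (I : H) (hI : I ∈ Sph) : I * I = -1 := by rw [← sq]; exact hI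

def iot (I : H) (hI : I ∈ Sph) : ℂ →ₐ[ℝ] H := Complex.liftAux I (sph_mul_self I hI)

variable {I : H}

lemma iot_apply (hI : I ∈ Sph) (z : ℂ) : iot I hI z = (z.re : H) + z.im • I := by
  simp [iot, Complex.liftAux_apply, Quaternion.algebraMap_def]

lemma iot_norm (hI : I ∈ Sph) (z : ℂ) : ‖iot I hI z‖ = ‖z‖ := by
  have hre := sph_re I hI
  have hns := sph_normSq I hI
  have h1 : Quaternion.normSq (iot I hI z) = ‖z‖ ^ 2 := by
    rw [iot_apply hI]
    simp [Quaternion.normSq_def', hre, Complex.sq_norm, Complex.normSq_apply,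
      Quaternion.normSq_def'] at *
    ring_nf
    ring_nf at hns
    nlinarith
  have h2 := Quaternion.normSq_eq_norm_mul_self (iot I hI z)
  nlinarith [norm_nonneg (iot I hI z), norm_nonneg z]


open Filter in
lemma slice_identity (hI : I ∈ Sph) (Ω : Set H) (hop : IsOpen Ω) (hconn : IsConnected (Ω ∩ Slice I))
    (f g : H → H) (hf : HoloSlice Ω f I) (hg : HoloSlice Ω g I)
    (C : Set H) (hC : C ⊆ Slice I) (heq : ∀ q ∈ C, f q = g q)
    (p : H) (hpΩ : p ∈ Ω) (hpI : p ∈ Slice I) (hacc : AccPt p (𝓟 C)) :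
    Set.EqOn f g (Ω ∩ Slice I) := by
  letI : Module ℂ H := Module.compHom H (iot I hI).toRingHom
  letI : NormedSpace ℂ H := ⟨fun z q => by
    have h : z • q = iot I hI z * q := rfl
    rw [h, norm_mul, iot_norm hI]⟩
  have hII := sph_mul_self I hI
  have hre := sph_re I hI
  have hsurj : ∀ q ∈ Slice I, ∃ z : ℂ, iot I hI z = q := by
    rintro q ⟨x, y, rfl⟩
    exact ⟨⟨x, y⟩, by rw [iot_apply]⟩
  have hmem : ∀ z : ℂ, iot I hI z ∈ Slice I := fun z => ⟨z.re, z.im, (iot_apply hI z).symm⟩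
  have hcont : Continuous (iot I hI) := (iot I hI).toLinearMap.continuous_of_finiteDimensional
  set U : Set ℂ := (iot I hI) ⁻¹' Ω with hU
  -- complex differentiability
  have key : ∀ h : H → H, HoloSlice Ω h I → DifferentiableOn ℂ (fun z => h (iot I hI z)) U := by
    intro h hh
    intro z hz
    have hzΩ : (z.re : H) + z.im • I ∈ Ω := by rw [← iot_apply hI]; exact hz
    obtain ⟨hdiff, hCR⟩ := hh z.re z.im hzΩ
    set G : ℝ × ℝ → H := fun p : ℝ × ℝ => h ((p.1 : H) + p.2 • I) with hG
    set D := fderiv ℝ G (z.re, z.im) with hD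
    have hGd : HasFDerivAt G D (z.re, z.im) := hdiff.hasFDerivAt
    set e := Complex.equivRealProdCLM with he
    have he1 : (e : ℂ →L[ℝ] ℝ × ℝ) 1 = ((1 : ℝ), (0 : ℝ)) := by simp [he]
    have hcomp : HasFDerivAt (fun w => h (iot I hI w))
        (D.comp (e : ℂ →L[ℝ] ℝ × ℝ)) z := by
      have h1 : HasFDerivAt (G ∘ e) (D.comp (e : ℂ →L[ℝ] ℝ × ℝ)) z := by
        refine HasFDerivAt.comp z ?_ (e.hasFDerivAt)
        simpa [he] using hGd
      have h2 : (G ∘ e) = fun w => h (iot I hI w) := by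
        funext w; simp [hG, he, iot_apply hI]
      rwa [h2] at h1
    set L := D.comp (e : ℂ →L[ℝ] ℝ × ℝ) with hL
    have hID : I * D (1, 0) = D (0, 1) := by
      have h1 : D (1, 0) = -(I * D (0, 1)) := eq_neg_of_add_eq_zero_left hCR
      rw [h1, mul_neg, ← mul_assoc, hII, neg_mul, one_mul, neg_neg]
    set L' : ℂ →L[ℂ] H := (ContinuousLinearMap.id ℂ ℂ).smulRight (D (1, 0)) with hL'
    have hclaim : ∀ w : ℂ, L' w = L w := by
      intro w
      have hLw : L w = w.re • D (1, 0) + w.im • D (0, 1) := by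
        have : (e : ℂ →L[ℝ] ℝ × ℝ) w = w.re • ((1:ℝ), (0:ℝ)) + w.im • ((0:ℝ), (1:ℝ)) := by
          simp [he, Prod.ext_iff]
        rw [hL, ContinuousLinearMap.comp_apply, this, map_add, map_smul, map_smul]
      have hL'w : L' w = iot I hI w * D (1, 0) := rfl
      rw [hL'w, hLw, iot_apply hI, add_mul, smul_mul_assoc, hID,
        Quaternion.coe_mul_eq_smul]
    have hC' : HasFDerivAt (𝕜 := ℂ) (fun w => h (iot I hI w)) L' z := by
      rw [hasFDerivAt_iff_isLittleO_nhds_zero] at hcomp ⊢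
      have hfun : (fun w : ℂ => h (iot I hI (z + w)) - h (iot I hI z) - L' w)
          = (fun w : ℂ => h (iot I hI (z + w)) - h (iot I hI z) - L w) := by
        funext w; rw [hclaim]
      rw [hfun]
      exact hcomp
    exact hC'.differentiableAt.differentiableWithinAt
  -- him
  have him : I.imI ^ 2 + I.imJ ^ 2 + I.imK ^ 2 = 1 := by
    have := sph_normSq I hI
    simp [Quaternion.normSq_def', hre] at this
    nlinarith
  -- projection
  set π : H → ℂ := fun q => Complex.equivRealProdCLM.symm (q.re, -(q * I).re) with hπ
  have hπcont : Continuous π := by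
    apply Complex.equivRealProdCLM.symm.continuous.comp
    exact (Quaternion.continuous_re.prodMk
      ((Quaternion.continuous_re.comp (continuous_mul_right I)).neg))
  have hπι : ∀ z : ℂ, π (iot I hI z) = z := by
    intro z
    have h1 : (iot I hI z).re = z.re := by
      rw [iot_apply hI]; simp [hre]
    have h2 : ((iot I hI z) * I).re = -z.im := by
      rw [iot_apply hI]
      simp [Quaternion.re_mul, hre, Quaternion.re_smul]
      linear_combination (-z.im) * him
    have h3 : π (iot I hI z)
        = Complex.equivRealProdCLM.symm (((iot I hI) z).re, -((iot I hI z) * I).re) := rfl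
    rw [h3, h1, h2, neg_neg]
    apply Complex.ext <;> simp
  -- preconnectedness of U
  have hUopen : IsOpen U := hop.preimage hcont
  have hUeq : U = π '' (Ω ∩ Slice I) := by
    ext w
    constructor
    · intro hw
      exact ⟨iot I hI w, ⟨hw, hmem w⟩, hπι w⟩
    · rintro ⟨q, ⟨hqΩ, hqI⟩, rfl⟩
      obtain ⟨z, rfl⟩ := hsurj q hqI
      rw [hπι]
      exact hqΩ
  have hUconn : IsPreconnected U := by
    rw [hUeq]
    exact (hconn.image π hπcont.continuousOn).isPreconnected
  -- base point
  obtain ⟨z₀, hz₀⟩ := hsurj p hpI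
  have hz₀U : z₀ ∈ U := by rw [hU, Set.mem_preimage, hz₀]; exact hpΩ
  have hπp : π p = z₀ := by rw [← hz₀, hπι]
  -- frequently
  have hfreq : ∃ᶠ z in nhdsWithin z₀ {z₀}ᶜ, f (iot I hI z) = g (iot I hI z) := by
    rw [frequently_nhdsWithin_iff]
    have h1 : ∃ᶠ y in nhds p, y ≠ p ∧ y ∈ C := accPt_iff_frequently.mp hacc
    have h2 : Filter.Tendsto π (nhds p) (nhds z₀) := by
      rw [← hπp]; exact hπcont.continuousAt
    have h3 : ∃ᶠ y in nhds p,
        (f (iot I hI (π y)) = g (iot I hI (π y)) ∧ π y ∈ ({z₀}ᶜ : Set ℂ)) := by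
      refine h1.mono ?_
      rintro y ⟨hyne, hyC⟩
      obtain ⟨w, rfl⟩ := hsurj y (hC hyC)
      rw [hπι]
      refine ⟨heq _ hyC, ?_⟩
      simp only [Set.mem_compl_iff, Set.mem_singleton_iff]
      intro hcon
      exact hyne (by rw [hcon, hz₀])
    exact h2.frequently h3
  -- analytic
  have hfa := ((key f hf).analyticOnNhd hUopen)
  have hga := ((key g hg).analyticOnNhd hUopen)
  have heqon := hfa.eqOn_of_preconnected_of_frequently_eq hga hUconn hz₀U hfreq
  rintro q ⟨hqΩ, hqI⟩
  obtain ⟨z, rfl⟩ := hsurj q hqI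
  exact heqon hqΩ


open Filter in
/-- Identity Principle: if two slice regular functions on a
slice domain coincide on a subset of a slice having an accumulation point in
that slice, they coincide on all of `Ω`. -/
theorem identity_principle (Ω : Set H) (hΩ : IsSliceDomain Ω)
    (f g : H → H) (hf : SliceRegular Ω f) (hg : SliceRegular Ω g)
    (I : H) (hI : I ∈ Sph) (C : Set H) (hC : C ⊆ Ω ∩ Slice I)
    (heq : ∀ q ∈ C, f q = g q)
    (p : H) (hp : p ∈ Ω ∩ Slice I) (hacc : AccPt p (𝓟 C)) :
    Set.EqOn f g Ω := by
  obtain ⟨hop, hconn0, hreal, hslices⟩ := hΩ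
  have hCI : C ⊆ Slice I := fun q hq => (hC hq).2
  have step1 : Set.EqOn f g (Ω ∩ Slice I) :=
    slice_identity hI Ω hop (hslices I hI) f g (hf I hI) (hg I hI) C hCI heq p hp.1 hp.2 hacc
  obtain ⟨r, hrΩ, t, rfl⟩ := hreal
  set C' : Set H := Ω ∩ realAxis with hC'
  have hC'slice : ∀ J : H, C' ⊆ Slice J := by
    rintro J q ⟨-, s, rfl⟩
    exact ⟨s, 0, by simp⟩
  have heq' : ∀ q ∈ C', f q = g q := fun q hq => step1 ⟨hq.1, hC'slice I hq⟩
  have hacc' : AccPt ((t : ℝ) : H) (𝓟 C') := by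
    rw [accPt_iff_nhds]
    intro V hV
    obtain ⟨ε, hε, hball⟩ := Metric.mem_nhds_iff.mp hV
    obtain ⟨δ, hδ, hball'⟩ := Metric.mem_nhds_iff.mp (hop.mem_nhds hrΩ)
    set s := min ε δ / 2 with hs
    have hs0 : 0 < s := by positivity
    have hdist : dist (((t + s : ℝ) : H)) ((t : ℝ) : H) = s := by
      rw [dist_eq_norm, ← Quaternion.coe_sub]
      simp [Quaternion.norm_coe, abs_of_pos hs0]
    refine ⟨((t + s : ℝ) : H), ⟨?_, ?_, ⟨t + s, rfl⟩⟩, ?_⟩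
    · apply hball
      rw [Metric.mem_ball, hdist]
      have hlt : s < min ε δ := by
        rw [hs]; have : 0 < min ε δ := lt_min hε hδ; linarith
      exact lt_of_lt_of_le hlt (min_le_left _ _)
    · apply hball'
      rw [Metric.mem_ball, hdist]
      have hlt : s < min ε δ := by
        rw [hs]; have : 0 < min ε δ := lt_min hε hδ; linarith
      exact lt_of_lt_of_le hlt (min_le_right _ _)
    · intro hcon
      have := Quaternion.coe_injective hcon
      linarith
  have main : ∀ J ∈ Sph, Set.EqOn f g (Ω ∩ Slice J) := by
    intro J hJ
    exact slice_identity hJ Ω hop (hslices J hJ) f g (hf J hJ) (hg J hJ) C'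
      (hC'slice J) heq' _ hrΩ ⟨t, 0, by simp⟩ hacc'
  intro q hqΩ
  by_cases hqr : q.imI = 0 ∧ q.imJ = 0 ∧ q.imK = 0
  · have hq : q ∈ Slice I := ⟨q.re, 0, by ext <;> simp [hqr.1, hqr.2.1, hqr.2.2]⟩
    exact main I hI ⟨hqΩ, hq⟩
  · set n := Real.sqrt (q.imI ^ 2 + q.imJ ^ 2 + q.imK ^ 2) with hn
    have hsum0 : 0 < q.imI ^ 2 + q.imJ ^ 2 + q.imK ^ 2 := by
      rcases not_and_or.mp hqr with h | h
      · nlinarith [sq_nonneg q.imI, sq_nonneg q.imJ, sq_nonneg q.imK, pow_two_pos_of_ne_zero h]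
      rcases not_and_or.mp h with h' | h'
      · nlinarith [sq_nonneg q.imI, sq_nonneg q.imJ, sq_nonneg q.imK, pow_two_pos_of_ne_zero h']
      · nlinarith [sq_nonneg q.imI, sq_nonneg q.imJ, sq_nonneg q.imK, pow_two_pos_of_ne_zero h']
    have hn2 : n ^ 2 = q.imI ^ 2 + q.imJ ^ 2 + q.imK ^ 2 := Real.sq_sqrt hsum0.le
    have hnpos : 0 < n := Real.sqrt_pos.mpr hsum0
    set J : H := ⟨0, q.imI / n, q.imJ / n, q.imK / n⟩ with hJdef
    have hJ : J ∈ Sph := by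
      show J ^ 2 = -1
      rw [sq]
      ext
      · show (J * J).re = (-1 : H).re
        simp only [Quaternion.re_mul]; simp [hJdef, Quaternion.re_one]
        field_simp
        nlinarith [hn2]
      · show (J * J).imI = (-1 : H).imI
        simp only [Quaternion.imI_mul]; simp [hJdef, Quaternion.imI_one]; ring
      · show (J * J).imJ = (-1 : H).imJ
        simp only [Quaternion.imJ_mul]; simp [hJdef, Quaternion.imJ_one]; ring
      · show (J * J).imK = (-1 : H).imK
        simp only [Quaternion.imK_mul]; simp [hJdef, Quaternion.imK_one]; ring
    have hqJ : q ∈ Slice J := by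
      refine ⟨q.re, n, ?_⟩
      ext
      · simp [Quaternion.re_smul]; simp [hJdef]
      · simp; simp [hJdef]; field_simp
      · simp; simp [hJdef]; field_simp
      · simp; simp [hJdef]; field_simp
    exact main J hJ ⟨hqΩ, hqJ⟩
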